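/- Let T be a monad on Type, ρ : T ∘ F ⟹ F ∘ T a natural transformation satisfying the unit law ρ_X ∘ η_{F X} = F(η_X) for all X, and (R, δ) a deterministic automaton with R finite. Let δ̂ := ((Prod.map id (η_R ∘ ·)) ∘ δ)^♯ : T R → O × (A → T R) be the determinization and L := l_{T R} : T R → (List A → O) its language map. Suppose (M, b) is a T-algebra, e : T R → M is a surjective T-algebra homomorphism, and m : M → (List A → O) is an injective function with m ∘ e = L. Suppose P is a predicate on R defining the subtype G = {x : R // P x} with inclusion ι : G → R, such that g := e ∘ η_R ∘ ι : G → M is a minimal set of generators for (M, b). Then the map G → (List A → O) sending r to l_R(ι r) is injective; consequently card G ≤ card {l_R(x) | x ∈ R}, i.e., the T-succinct automaton on G is at least as small as the minimal deterministic automaton equivalent to (R, δ). -/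

import Mathlib

open CategoryTheory

universe u

/-- The language map of a deterministic automaton `(X, δ)` with outputs in `O`. -/
def detLang {A O X : Type u} (δ : X → O × (A → X)) : X → List A → O
  | x, [] => (δ x).1
  | x, a :: w => detLang δ ((δ x).2 a) w

/-- The free `T`-extension of `h : Y → F (T Y)`, where `F X = O × (A → X)`:
`h^♯ = F μ_Y ∘ ρ_{T Y} ∘ T h`. -/
def freeExtAut {T : Monad (Type u)} {A O : Type u}
    (ρ : ∀ X : Type u, T.toFunctor.obj (O × (A → X)) → O × (A → T.toFunctor.obj X))
    {Y : Type u} (h : Y → O × (A → T.toFunctor.obj Y)) :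
    T.toFunctor.obj Y → O × (A → T.toFunctor.obj Y) :=
  Prod.map (id : O → O)
      (fun k : A → T.toFunctor.obj (T.toFunctor.obj Y) => T.μ.app Y ∘ k)
    ∘ ρ (T.toFunctor.obj Y) ∘ T.toFunctor.map (TypeCat.ofHom h)

/-- `g : G → X` is a set of generators for the `T`-algebra `(X, χ)`. -/
def IsGeneratorSet (T : Monad (Type u)) {G X : Type u}
    (χ : T.toFunctor.obj X → X) (g : G → X) : Prop :=
  ∃ s : X → T.toFunctor.obj G, (χ ∘ T.toFunctor.map (TypeCat.ofHom g)) ∘ s = id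

/-- `r : G` is redundant with respect to `g : G → X`. -/
def Redundant (T : Monad (Type u)) {G X : Type u}
    (χ : T.toFunctor.obj X → X) (g : G → X) (r : G) : Prop :=
  ∃ U : T.toFunctor.obj {x : G // x ≠ r},
    χ (T.toFunctor.map (TypeCat.ofHom (fun u : {x : G // x ≠ r} => g u.val)) U) = g r

/-- with `(R, δ)` a finite deterministic automaton, `δ̂` its determinization
with language map `L = l_{T R}`, `(M, b)` a `T`-algebra, `e : T R → M` a surjective
`T`-algebra homomorphism, `m : M → (List A → O)` injective with `m ∘ e = L`, and a
subtype `G ⊆ R` such that `g = e ∘ η_R ∘ ι` is a minimal set of generators for `(M, b)`,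
the map `G → (List A → O)`, `r ↦ l_R(ι r)` is injective; consequently
`card G ≤ card {l_R x | x ∈ R}`: the `T`-succinct automaton on `G` is at least as small
as the minimal deterministic automaton equivalent to `(R, δ)`. -/
theorem succinct_at_most_minimal_dfa
    (T : Monad (Type u)) (A O : Type u)
    (ρ : ∀ X : Type u, T.toFunctor.obj (O × (A → X)) → O × (A → T.toFunctor.obj X))
    (hρnat : ∀ (X Y : Type u) (f : X → Y),
      ρ Y ∘ T.toFunctor.map (TypeCat.ofHom (Prod.map (id : O → O) (fun k : A → X => f ∘ k)))
        = Prod.map (id : O → O)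
            (fun k : A → T.toFunctor.obj X => T.toFunctor.map (TypeCat.ofHom f) ∘ k) ∘ ρ X)
    (hρunit : ∀ X : Type u,
      ρ X ∘ T.η.app (O × (A → X))
        = Prod.map (id : O → O) (fun k : A → X => T.η.app X ∘ k))
    (R : Type u) (hR : Finite R) (δ : R → O × (A → R))
    (M : Type u) (b : T.toFunctor.obj M → M)
    (hbunit : b ∘ T.η.app M = id)
    (hbassoc : b ∘ T.μ.app M = b ∘ T.toFunctor.map (TypeCat.ofHom b))
    (e : T.toFunctor.obj R → M) (hesurj : Function.Surjective e)
    (hehom : e ∘ T.μ.app R = b ∘ T.toFunctor.map (TypeCat.ofHom e))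
    (m : M → List A → O) (hminj : Function.Injective m)
    (hme : m ∘ e
      = detLang (freeExtAut ρ (Prod.map (id : O → O) (fun k : A → R => T.η.app R ∘ k) ∘ δ)))
    (P : R → Prop)
    (hgen : IsGeneratorSet T b
      (fun r : {x : R // P x} => e (T.η.app R r.val)))
    (hmin : ∀ r : {x : R // P x},
      ¬ Redundant T b (fun r : {x : R // P x} => e (T.η.app R r.val)) r) :
    Function.Injective (fun r : {x : R // P x} => detLang δ r.val)
    ∧ Nat.card {x : R // P x} ≤ Nat.card (Set.range (detLang δ)) := by
  classical
  haveI := hR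
  set h : R → O × (A → T.toFunctor.obj R) :=
    Prod.map (id : O → O) (fun k : A → R => T.η.app R ∘ k) ∘ δ with hh
  -- δ̂ (η x) = ((δ x).1, η ∘ (δ x).2)
  have hstep : ∀ x : R, freeExtAut ρ h (T.η.app R x)
      = ((δ x).1, fun a => T.η.app R ((δ x).2 a)) := by
    intro x
    have hnat : T.toFunctor.map (TypeCat.ofHom h) (T.η.app R x) = T.η.app _ (h x) := by
      have := ConcreteCategory.congr_hom (T.η.naturality (TypeCat.ofHom h)) x
      simpa [types_comp] using this.symm
    have hru : ∀ t : T.toFunctor.obj R,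
        T.μ.app R (T.η.app (T.toFunctor.obj R) t) = t := by
      intro t
      have := ConcreteCategory.congr_hom (T.left_unit R) t
      exact this
    have hu := congrFun (hρunit (T.toFunctor.obj R)) (h x)
    simp only [Function.comp] at hu
    simp only [freeExtAut, Function.comp, hnat, hu]
    ext
    · simp [hh, Prod.map]
    · simp [hh, Prod.map, hru]
  -- languages agree: detLang δ̂ (η x) = detLang δ x
  have hlang : ∀ (w : List A) (x : R),
      detLang (freeExtAut ρ h) (T.η.app R x) w = detLang δ x w := by
    intro w
    induction w with
    | nil => intro x; simp [detLang, hstep]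
    | cons a w ih => intro x; simp [detLang, hstep, ih]
  have hkey : ∀ x : R, m (e (T.η.app R x)) = detLang δ x := by
    intro x
    have := congrFun hme (T.η.app R x)
    simp only [Function.comp] at this
    rw [this]
    funext w; exact hlang w x
  -- injectivity
  have hinj : Function.Injective (fun r : {x : R // P x} => detLang δ r.val) := by
    intro r₁ r₂ hr
    by_contra hne
    apply hmin r₁
    have hg : e (T.η.app R r₁.val) = e (T.η.app R r₂.val) := by
      apply hminj
      rw [hkey, hkey]; exact hr
    have hnat : ∀ v : {x : {x : R // P x} // x ≠ r₁},
        T.toFunctor.map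
          (TypeCat.ofHom (fun v : {x : {x : R // P x} // x ≠ r₁} => e (T.η.app R v.val.val)))
          (T.η.app _ v)
          = T.η.app M (e (T.η.app R v.val.val)) := by
      intro v
      have := ConcreteCategory.congr_hom (T.η.naturality
        (TypeCat.ofHom (fun v : {x : {x : R // P x} // x ≠ r₁} => e (T.η.app R v.val.val)))) v
      simpa [types_comp] using this.symm
    have hb : ∀ z : M, b (T.η.app M z) = z := by
      intro z
      have := congrFun hbunit z
      simpa [Function.comp] using this
    refine ⟨T.η.app _ ⟨r₂, fun hc => hne hc.symm⟩, ?_⟩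
    rw [hnat, hb]
    exact hg.symm
  refine ⟨hinj, ?_⟩
  have : Function.Injective (fun r : {x : R // P x} =>
      (⟨detLang δ r.val, ⟨r.val, rfl⟩⟩ : Set.range (detLang δ))) := by
    intro r₁ r₂ hr
    exact hinj (congrArg Subtype.val hr)
  exact Nat.card_le_card_of_injective _ this
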